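/- arXiv:2308.04985 — 5 statements merged into one kernel-verified Lean document; each statement's English description precedes it below -/
import Mathlib

section
/- If μ ∈ M(ℝ^{2d}) and R is a compact operator on L²(ℝᵈ), then the operator μ⋆R defined weakly by ⟨(μ⋆R)ψ,φ⟩ = ∫⟨π(z)Rπ(z)*ψ,φ⟩dμ(z) is compact. -/
open ContinuousLinearMap MeasureTheory Filter Metric Set Topology Pointwise

set_option maxHeartbeats 1000000
set_option synthInstance.maxHeartbeats 400000

noncomputable section

variable {H : Type*} [NormedAddCommGroup H] [InnerProductSpace ℂ H] [CompleteSpace H]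

local notation "⟪" x ", " y "⟫" => @inner ℂ _ _ x y

/-- From a compact operator, extract a compact set containing the image of any given
closed ball around the origin. -/
lemma exists_compact_image_of_le {A : H →L[ℂ] H} (hA : IsCompactOperator (⇑A)) (M : ℝ)
    (hM : 0 ≤ M) : ∃ S : Set H, IsCompact S ∧ ∀ x : H, ‖x‖ ≤ M → A x ∈ S := by
  obtain ⟨K, hK, hKA⟩ := hA
  obtain ⟨r, hr, hball⟩ := Metric.mem_nhds_iff.mp hKA
  have hden : (0:ℝ) < 2 * (M + 1) / r := by positivity
  set c : ℂ := ((2 * (M + 1) / r : ℝ) : ℂ) with hc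
  have hc0 : c ≠ 0 := by
    simp only [hc, ne_eq, Complex.ofReal_eq_zero]
    exact ne_of_gt hden
  refine ⟨c • K, hK.image (continuous_const_smul c), ?_⟩
  intro x hx
  have hy : A (c⁻¹ • x) ∈ K := by
    apply hball
    rw [Metric.mem_ball, dist_zero_right, norm_smul, norm_inv]
    have hnc : ‖c‖ = 2 * (M + 1) / r := by
      rw [hc, Complex.norm_real, Real.norm_of_nonneg hden.le]
    rw [hnc]
    have hlt : ‖x‖ < 2 * (M + 1) := lt_of_le_of_lt hx (by linarith)
    rw [inv_mul_lt_iff₀ hden, div_mul_eq_mul_div, mul_comm]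
    calc ‖x‖ < 2 * (M + 1) := hlt
      _ = (2 * (M + 1)) * r / r := by field_simp
      _ = r * (2 * (M + 1)) / r := by ring
  have : A x = c • A (c⁻¹ • x) := by
    rw [← A.map_smul, smul_inv_smul₀ hc0]
  rw [this]
  exact smul_mem_smul_set hy

/-- Schauder's theorem in a Hilbert space: the adjoint of a compact operator is compact. -/
lemma isCompactOperator_adjoint {A : H →L[ℂ] H} (hA : IsCompactOperator (⇑A)) :
    IsCompactOperator (⇑(adjoint A)) := by
  obtain ⟨S, hS, hSA⟩ := exists_compact_image_of_le hA ‖adjoint A‖ (norm_nonneg _)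
  have key : ∀ u v : H, ‖u‖ ≤ 1 → ‖v‖ ≤ 1 →
      ‖adjoint A u - adjoint A v‖ ^ 2 ≤ 2 * ‖A (adjoint A u) - A (adjoint A v)‖ := by
    intro u v hu hv
    have h0 : adjoint A u - adjoint A v = adjoint A (u - v) := (map_sub _ u v).symm
    have himg : A (adjoint A u) - A (adjoint A v) = A (adjoint A (u - v)) := by
      rw [← map_sub, ← map_sub]
    rw [h0, himg]
    have h1 : (‖adjoint A (u - v)‖ : ℝ) ^ 2
        = RCLike.re (⟪adjoint A (u - v), adjoint A (u - v)⟫) := by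
      rw [inner_self_eq_norm_sq]
    have h2 : (⟪adjoint A (u - v), adjoint A (u - v)⟫)
        = ⟪u - v, A (adjoint A (u - v))⟫ :=
      ContinuousLinearMap.adjoint_inner_left A (adjoint A (u - v)) (u - v)
    have h3 : RCLike.re (⟪u - v, A (adjoint A (u - v))⟫)
        ≤ ‖(⟪u - v, A (adjoint A (u - v))⟫ : ℂ)‖ := RCLike.re_le_norm _
    have h4 : ‖(⟪u - v, A (adjoint A (u - v))⟫ : ℂ)‖
        ≤ ‖u - v‖ * ‖A (adjoint A (u - v))‖ := norm_inner_le_norm _ _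
    have h5 : ‖u - v‖ ≤ 2 := by
      calc ‖u - v‖ ≤ ‖u‖ + ‖v‖ := norm_sub_le _ _
        _ ≤ 2 := by linarith
    calc ‖adjoint A (u - v)‖ ^ 2
        = RCLike.re (⟪u - v, A (adjoint A (u - v))⟫) := by rw [h1, h2]
      _ ≤ ‖u - v‖ * ‖A (adjoint A (u - v))‖ := h3.trans h4
      _ ≤ 2 * ‖A (adjoint A (u - v))‖ :=
          mul_le_mul_of_nonneg_right h5 (norm_nonneg _)
  have htb : TotallyBounded ((⇑(adjoint A)) '' Metric.closedBall 0 1) := by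
    rw [Metric.totallyBounded_iff]
    intro ε hε
    set δ : ℝ := ε ^ 2 / 8 with hδdef
    have hδ0 : 0 < δ := by positivity
    obtain ⟨t, htfin, hcov⟩ :=
      Metric.totallyBounded_iff.mp hS.totallyBounded δ hδ0
    classical
    set u : H → H := fun y =>
      if hy : ∃ u : H, ‖u‖ ≤ 1 ∧ A (adjoint A u) ∈ Metric.ball y δ then hy.choose else 0
      with hudef
    refine ⟨(fun y => adjoint A (u y)) '' t, htfin.image _, ?_⟩
    rintro x ⟨w, hw, rfl⟩
    rw [Metric.mem_closedBall, dist_zero_right] at hw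
    have hAw : A (adjoint A w) ∈ S := by
      apply hSA
      calc ‖adjoint A w‖ ≤ ‖adjoint A‖ * ‖w‖ := le_opNorm _ _
        _ ≤ ‖adjoint A‖ := by
            nlinarith [norm_nonneg (adjoint A)]
    obtain ⟨y, hyt, hy⟩ := Set.mem_iUnion₂.mp (hcov hAw)
    have hex : ∃ u : H, ‖u‖ ≤ 1 ∧ A (adjoint A u) ∈ Metric.ball y δ := ⟨w, hw, hy⟩
    have hu0 : ‖u y‖ ≤ 1 ∧ A (adjoint A (u y)) ∈ Metric.ball y δ := by
      rw [hudef]; simp only [dif_pos hex]; exact hex.choose_spec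
    refine Set.mem_iUnion₂.mpr ⟨adjoint A (u y), Set.mem_image_of_mem _ hyt, ?_⟩
    rw [Metric.mem_ball]
    have hd : ‖A (adjoint A w) - A (adjoint A (u y))‖ < 2 * δ := by
      calc ‖A (adjoint A w) - A (adjoint A (u y))‖
          ≤ dist (A (adjoint A w)) y + dist (A (adjoint A (u y))) y := by
            rw [dist_eq_norm, dist_eq_norm]
            have := norm_sub_le (A (adjoint A w) - y) (A (adjoint A (u y)) - y)
            simpa using this
        _ < δ + δ := add_lt_add (Metric.mem_ball.mp hy) (Metric.mem_ball.mp hu0.2)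
        _ = 2 * δ := by ring
    have hsq : ‖adjoint A w - adjoint A (u y)‖ ^ 2 < ε ^ 2 := by
      calc ‖adjoint A w - adjoint A (u y)‖ ^ 2
          ≤ 2 * ‖A (adjoint A w) - A (adjoint A (u y))‖ := key w (u y) hw hu0.1
        _ < 2 * (2 * δ) := by linarith
        _ = ε ^ 2 / 2 := by rw [hδdef]; ring
        _ < ε ^ 2 := by
            have hε2 : 0 < ε ^ 2 := by positivity
            linarith
    rw [dist_eq_norm]
    exact lt_of_pow_lt_pow_left₀ 2 hε.le hsq
  refine ⟨closure ((⇑(adjoint A)) '' Metric.closedBall 0 1),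
    TotallyBounded.isCompact_of_isClosed htb.closure isClosed_closure, ?_⟩
  exact Filter.mem_of_superset (Metric.closedBall_mem_nhds 0 one_pos)
    (fun x hx => subset_closure (Set.mem_image_of_mem _ hx))

/-- Composition with a compact operator upgrades pointwise convergence to norm
convergence. -/
lemma tendsto_comp_compact_zero {ι : Type*} {l : Filter ι} {A : ι → H →L[ℂ] H}
    {K : H →L[ℂ] H} (hK : IsCompactOperator (⇑K)) {C : ℝ} (hbd : ∀ i, ‖A i‖ ≤ C)
    (hptw : ∀ x : H, Tendsto (fun i => A i x) l (𝓝 0)) :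
    Tendsto (fun i => A i ∘L K) l (𝓝 0) := by
  rw [Metric.tendsto_nhds]
  intro ε hε
  set C' : ℝ := max C 1 with hC'def
  have hC'0 : 0 < C' := lt_of_lt_of_le one_pos (le_max_right _ _)
  set δ : ℝ := ε / (8 * C') with hδdef
  have hδ0 : 0 < δ := by positivity
  obtain ⟨S, hS, hSK⟩ := exists_compact_image_of_le hK 1 zero_le_one
  obtain ⟨t, htfin, hcov⟩ := Metric.totallyBounded_iff.mp hS.totallyBounded δ hδ0
  have hev : ∀ᶠ i in l, ∀ y ∈ t, ‖A i y‖ < ε / 8 := by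
    rw [Filter.eventually_all_finite htfin]
    intro y _
    have h := (hptw y).norm
    rw [norm_zero] at h
    exact h.eventually_lt_const (by positivity)
  filter_upwards [hev] with i hi
  rw [dist_zero_right]
  have hb : ∀ x : H, ‖x‖ ≤ 1 → ‖(A i) (K x)‖ ≤ ε / 4 := by
    intro x hx
    obtain ⟨y, hyt, hy⟩ := Set.mem_iUnion₂.mp (hcov (hSK x hx))
    have h1 : ‖A i (K x) - A i y‖ ≤ C' * δ := by
      rw [← map_sub]
      calc ‖A i (K x - y)‖ ≤ ‖A i‖ * ‖K x - y‖ := le_opNorm _ _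
        _ ≤ C' * δ := by
            apply mul_le_mul ((hbd i).trans (le_max_left _ _)) _ (norm_nonneg _) hC'0.le
            rw [← dist_eq_norm]
            exact (Metric.mem_ball.mp hy).le
    have h2 : ‖A i y‖ < ε / 8 := hi y hyt
    have h3 : C' * δ = ε / 8 := by
      rw [hδdef]; field_simp
    calc ‖A i (K x)‖ = ‖(A i (K x) - A i y) + A i y‖ := by rw [sub_add_cancel]
      _ ≤ ‖A i (K x) - A i y‖ + ‖A i y‖ := norm_add_le _ _
      _ ≤ C' * δ + ε / 8 := add_le_add h1 h2.le
      _ = ε / 4 := by rw [h3]; ring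
  have hop : ‖A i ∘L K‖ ≤ ε / 2 := by
    refine ContinuousLinearMap.opNorm_le_of_shell (c := (2:ℂ)) one_pos (by positivity) ?_ ?_
    · rw [Complex.norm_ofNat]; norm_num
    · intro x hx1 hx2
      have h1 : (1:ℝ)/2 ≤ ‖x‖ := by
        rw [Complex.norm_ofNat] at hx1
        simpa using hx1
      calc ‖(A i ∘L K) x‖ = ‖A i (K x)‖ := rfl
        _ ≤ ε / 4 := hb x hx2.le
        _ = (ε / 2) * (1/2) := by ring
        _ ≤ (ε / 2) * ‖x‖ :=
            mul_le_mul_of_nonneg_left h1 (by positivity)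
  calc ‖A i ∘L K‖ ≤ ε / 2 := hop
    _ < ε := by linarith

/-- Variant with the compact factor on the left and an adjoint. -/
lemma tendsto_clm_comp_adjoint_zero {ι : Type*} {l : Filter ι} {A : ι → H →L[ℂ] H}
    {K : H →L[ℂ] H} (hK : IsCompactOperator (⇑(adjoint K))) {C : ℝ}
    (hbd : ∀ i, ‖A i‖ ≤ C)
    (hptw : ∀ x : H, Tendsto (fun i => A i x) l (𝓝 0)) :
    Tendsto (fun i => K ∘L adjoint (A i)) l (𝓝 0) := by
  have h := tendsto_comp_compact_zero hK hbd hptw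
  have hcontadj : Continuous (fun B : H →L[ℂ] H => adjoint B) :=
    (ContinuousLinearMap.adjoint (𝕜 := ℂ) (E := H) (F := H)).toLinearIsometry.continuous
  have h2 : Tendsto (fun i => adjoint (A i ∘L adjoint K)) l (𝓝 (adjoint 0)) :=
    (hcontadj.tendsto 0).comp h
  rw [map_zero] at h2
  refine h2.congr fun i => ?_
  rw [adjoint_comp, adjoint_adjoint]

/-- If `μ` is a bounded complex measure on `ℝ^{2d}` (polar form `dμ = h dν`, `|h| = 1`,
`ν` finite) and `R` is a compact operator, then the weakly defined operator `μ ⋆ R` is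
compact. -/
theorem measure_op_conv_compact {d : ℕ}
    (π : EuclideanSpace ℝ (Fin (2 * d)) → H →L[ℂ] H)
    (hunit : ∀ z, π z ∘L adjoint (π z) = 1 ∧ adjoint (π z) ∘L π z = 1)
    (hmul : ∀ z w, ∃ c : ℂ, ‖c‖ = 1 ∧ π z ∘L π w = c • π (z + w))
    (hcont : ∀ ψ : H, Continuous fun z => π z ψ)
    (hcont' : ∀ ψ : H, Continuous fun z => adjoint (π z) ψ)
    (ν : Measure (EuclideanSpace ℝ (Fin (2 * d)))) [IsFiniteMeasure ν]
    (h : EuclideanSpace ℝ (Fin (2 * d)) → ℂ) (hmeas : Measurable h)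
    (hmod : ∀ z, ‖h z‖ = 1)
    (R : H →L[ℂ] H) (hR : IsCompactOperator R)
    (T : H →L[ℂ] H)
    (hT : ∀ ψ φ : H, (inner ℂ φ (T ψ) : ℂ) =
      ∫ z, h z * (inner ℂ φ (π z (R (adjoint (π z) ψ))) : ℂ) ∂ν) :
    IsCompactOperator T := by
  -- π z is an isometry
  have hisom : ∀ z ψ, ‖π z ψ‖ = ‖ψ‖ := by
    intro z ψ
    have h1 : adjoint (π z) (π z ψ) = ψ := by
      have := congrArg (fun f : H →L[ℂ] H => f ψ) (hunit z).2
      simpa using this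
    have h2 : (⟪π z ψ, π z ψ⟫ : ℂ) = ⟪ψ, ψ⟫ := by
      have := ContinuousLinearMap.adjoint_inner_left (π z) ψ (π z ψ)
      rw [h1] at this
      exact this.symm
    have h3 : (‖π z ψ‖ : ℝ) ^ 2 = ‖ψ‖ ^ 2 := by
      have := congrArg RCLike.re h2
      rwa [inner_self_eq_norm_sq, inner_self_eq_norm_sq] at this
    calc ‖π z ψ‖ = Real.sqrt (‖π z ψ‖ ^ 2) := (Real.sqrt_sq (norm_nonneg _)).symm
      _ = Real.sqrt (‖ψ‖ ^ 2) := by rw [h3]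
      _ = ‖ψ‖ := Real.sqrt_sq (norm_nonneg _)
  have hnorm : ∀ z, ‖π z‖ ≤ 1 := by
    intro z
    refine ContinuousLinearMap.opNorm_le_bound _ zero_le_one fun ψ => ?_
    rw [hisom z ψ, one_mul]
  have hadjnorm : ∀ z, ‖adjoint (π z)‖ = ‖π z‖ := fun z =>
    LinearIsometryEquiv.norm_map (ContinuousLinearMap.adjoint (𝕜 := ℂ) (E := H) (F := H)) (π z)
  have hnorm' : ∀ z, ‖adjoint (π z)‖ ≤ 1 := fun z => (hadjnorm z).le.trans (hnorm z)
  -- the conjugated operators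
  set g : EuclideanSpace ℝ (Fin (2 * d)) → H →L[ℂ] H :=
    fun z => π z ∘L (R ∘L adjoint (π z)) with hgdef
  -- continuity of g in operator norm
  have hgcont : Continuous g := by
    rw [continuous_iff_continuousAt]
    intro w
    have hbd2 : ∀ z, ‖π z - π w‖ ≤ 2 := by
      intro z
      calc ‖π z - π w‖ ≤ ‖π z‖ + ‖π w‖ := norm_sub_le _ _
        _ ≤ 2 := by linarith [hnorm z, hnorm w]
    have hptw2 : ∀ x : H, Tendsto (fun z => (π z - π w) x) (𝓝 w) (𝓝 0) := by
      intro x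
      have h1 : Tendsto (fun z => π z x - π w x) (𝓝 w) (𝓝 (π w x - π w x)) :=
        ((hcont x).tendsto w).sub tendsto_const_nhds
      rw [sub_self] at h1
      exact h1.congr fun z => (ContinuousLinearMap.sub_apply _ _ _).symm
    have h1 : Tendsto (fun z => ((π z - π w) ∘L R) ∘L adjoint (π z)) (𝓝 w) (𝓝 0) := by
      have hB : Tendsto (fun z => (π z - π w) ∘L R) (𝓝 w) (𝓝 0) :=
        tendsto_comp_compact_zero hR hbd2 hptw2
      have hBn : Tendsto (fun z => ‖(π z - π w) ∘L R‖) (𝓝 w) (𝓝 0) := by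
        have := hB.norm; rwa [norm_zero] at this
      refine squeeze_zero_norm (fun z => ?_) hBn
      calc ‖((π z - π w) ∘L R) ∘L adjoint (π z)‖
          ≤ ‖(π z - π w) ∘L R‖ * ‖adjoint (π z)‖ := ContinuousLinearMap.opNorm_comp_le _ _
        _ ≤ ‖(π z - π w) ∘L R‖ := by
            exact mul_le_of_le_one_right (norm_nonneg _) (hnorm' z)
    have h2 : Tendsto (fun z => (π w ∘L R) ∘L adjoint (π z - π w)) (𝓝 w) (𝓝 0) := by
      refine tendsto_clm_comp_adjoint_zero ?_ hbd2 hptw2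
      have hcomp : IsCompactOperator (⇑(adjoint R) ∘ ⇑(adjoint (π w))) :=
        (isCompactOperator_adjoint hR).comp_clm (adjoint (π w))
      rw [adjoint_comp]
      rwa [ContinuousLinearMap.coe_comp']
    have hsplit : ∀ z, g z = g w +
        ((((π z - π w) ∘L R) ∘L adjoint (π z)) + ((π w ∘L R) ∘L adjoint (π z - π w))) := by
      intro z
      ext ψ
      simp only [hgdef, ContinuousLinearMap.add_apply, ContinuousLinearMap.comp_apply,
        ContinuousLinearMap.sub_apply, map_sub]
      abel
    have htend : Tendsto (fun z => g w +
        ((((π z - π w) ∘L R) ∘L adjoint (π z)) + ((π w ∘L R) ∘L adjoint (π z - π w))))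
        (𝓝 w) (𝓝 (g w + (0 + 0))) := tendsto_const_nhds.add (h1.add h2)
    rw [add_zero, add_zero] at htend
    exact htend.congr fun z => (hsplit z).symm
  -- the integrand
  set fI : EuclideanSpace ℝ (Fin (2 * d)) → H →L[ℂ] H := fun z => h z • g z with hfIdef
  have hbound : ∀ z, ‖fI z‖ ≤ ‖R‖ := by
    intro z
    rw [hfIdef]
    simp only [norm_smul, hmod z, one_mul]
    calc ‖g z‖ ≤ ‖π z‖ * ‖R ∘L adjoint (π z)‖ := ContinuousLinearMap.opNorm_comp_le _ _
      _ ≤ 1 * (‖R‖ * ‖adjoint (π z)‖) := by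
          apply mul_le_mul (hnorm z) (ContinuousLinearMap.opNorm_comp_le _ _)
            (norm_nonneg _) zero_le_one
      _ ≤ 1 * (‖R‖ * 1) := by
          apply mul_le_mul_of_nonneg_left _ zero_le_one
          exact mul_le_mul_of_nonneg_left (hnorm' z) (norm_nonneg _)
      _ = ‖R‖ := by ring
  have hfmeas : AEStronglyMeasurable fI ν :=
    ((hmeas.stronglyMeasurable).smul hgcont.stronglyMeasurable).aestronglyMeasurable
  have hfint : Integrable fI ν :=
    ⟨hfmeas, HasFiniteIntegral.of_bounded (C := ‖R‖) (ae_of_all _ hbound)⟩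
  -- T equals the Bochner integral
  set Sop : H →L[ℂ] H := ∫ z, fI z ∂ν with hSdef
  have hTS : T = Sop := by
    ext ψ
    refine ext_inner_left ℂ fun φ => ?_
    rw [hT ψ φ]
    have h1 : Sop ψ = ∫ z, fI z ψ ∂ν := by
      rw [hSdef]; exact integral_apply hfint ψ
    rw [h1, ← integral_inner (hfint.apply_continuousLinearMap ψ)]
    congr 1
    funext z
    rw [hfIdef]
    simp only [ContinuousLinearMap.smul_apply, inner_smul_right, hgdef,
      ContinuousLinearMap.comp_apply]
  -- the set of compact operators
  set 𝒦 : Set (H →L[ℂ] H) := { f | IsCompactOperator f } with h𝒦def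
  have hclosed : IsClosed 𝒦 := isClosed_setOf_isCompactOperator
  have hconv : Convex ℝ 𝒦 := by
    intro f hf f' hf' a b _ _ _
    have := ((hf : IsCompactOperator (⇑f)).smul a).add ((hf' : IsCompactOperator (⇑f')).smul b)
    show IsCompactOperator (⇑(a • f + b • f'))
    have hco : ⇑(a • f + b • f') = a • ⇑f + b • ⇑f' := by
      ext x; simp
    rwa [hco]
  have hmem : ∀ z, fI z ∈ 𝒦 := by
    intro z
    show IsCompactOperator (⇑(h z • g z))
    have hgz : IsCompactOperator (⇑(g z)) := by
      have := (hR.comp_clm (adjoint (π z))).clm_comp (π z)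
      have hco : ⇑(g z) = ⇑(π z) ∘ (⇑R ∘ ⇑(adjoint (π z))) := by
        rw [hgdef]; ext x; simp
      rwa [hco]
    have hco : ⇑(h z • g z) = h z • ⇑(g z) := by ext x; simp
    rw [hco]
    exact hgz.smul (h z)
  -- conclude, splitting on whether ν = 0
  by_cases hν : ν = 0
  · have hT0 : T = 0 := by
      rw [hTS, hSdef, hν, integral_zero_measure]
    rw [hT0]
    show IsCompactOperator (⇑(0 : H →L[ℂ] H))
    have hz : (⇑(0 : H →L[ℂ] H)) = (0 : H → H) := rfl
    rw [hz]
    exact isCompactOperator_zero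
  · haveI : NeZero ν := ⟨hν⟩
    have hν' : ν Set.univ ≠ 0 := by
      simpa [Measure.measure_univ_eq_zero] using hν
    set μ' : Measure (EuclideanSpace ℝ (Fin (2 * d))) := (ν Set.univ)⁻¹ • ν with hμ'def
    haveI : IsProbabilityMeasure μ' := by
      rw [hμ'def]; infer_instance
    have hint' : Integrable fI μ' := by
      rw [hμ'def]
      exact hfint.smul_measure (ENNReal.inv_ne_top.mpr hν')
    have hImem : (∫ z, fI z ∂μ') ∈ 𝒦 :=
      hconv.integral_mem hclosed (ae_of_all _ hmem) hint'
    have hSeq : Sop = (ν Set.univ).toReal • ∫ z, fI z ∂μ' := by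
      rw [hSdef]
      have hmeq : (ν Set.univ) • μ' = ν := by
        rw [hμ'def, smul_smul, ENNReal.mul_inv_cancel hν' (measure_ne_top ν _), one_smul]
      calc (∫ z, fI z ∂ν) = ∫ z, fI z ∂((ν Set.univ) • μ') := by rw [hmeq]
        _ = (ν Set.univ).toReal • ∫ z, fI z ∂μ' := integral_smul_measure _ _
    rw [hTS, hSeq]
    show IsCompactOperator (⇑((ν Set.univ).toReal • ∫ z, fI z ∂μ'))
    have hco : ⇑((ν Set.univ).toReal • ∫ z, fI z ∂μ')
        = (ν Set.univ).toReal • ⇑(∫ z, fI z ∂μ') := by ext x; simp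
    rw [hco]
    exact (hImem : IsCompactOperator _).smul _

end
end

section
/- For a compact operator S on L²(ℝᵈ) and ψ, φ ∈ L²(ℝᵈ), the function z ↦ ⟨π(z)Sπ(z)*ψ, φ⟩ belongs to C₀(ℝ^{2d}), i.e., is continuous and vanishes at infinity. -/
open ContinuousLinearMap Filter Topology

noncomputable section

variable {H : Type*} [NormedAddCommGroup H] [InnerProductSpace ℂ H] [CompleteSpace H]

/-- For a compact operator `S` and `ψ, φ ∈ L²(ℝᵈ)`, the function
`z ↦ ⟨π(z)Sπ(z)*ψ, φ⟩` is continuous and vanishes at infinity, i.e. lies in `C₀(ℝ^{2d})`.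
The hypotheses record that `π` is a strongly continuous family of unitaries whose matrix
coefficients (the STFTs) vanish at infinity. -/
theorem matrix_coefficient_conjugation_C0 {d : ℕ}
    (π : EuclideanSpace ℝ (Fin (2 * d)) → H →L[ℂ] H)
    (hunit : ∀ z, π z ∘L adjoint (π z) = 1 ∧ adjoint (π z) ∘L π z = 1)
    (hmul : ∀ z w, ∃ c : ℂ, ‖c‖ = 1 ∧ π z ∘L π w = c • π (z + w))
    (hcont : ∀ ψ : H, Continuous fun z => π z ψ)
    (hcont' : ∀ ψ : H, Continuous fun z => adjoint (π z) ψ)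
    (hC0 : ∀ ψ φ : H, Tendsto (fun z => (inner ℂ (π z φ) ψ : ℂ))
      (cocompact (EuclideanSpace ℝ (Fin (2 * d)))) (𝓝 0))
    (S : H →L[ℂ] H) (hS : IsCompactOperator S) (ψ φ : H) :
    Continuous (fun z => (inner ℂ φ (π z (S (adjoint (π z) ψ))) : ℂ)) ∧
    Tendsto (fun z => (inner ℂ φ (π z (S (adjoint (π z) ψ))) : ℂ))
      (cocompact (EuclideanSpace ℝ (Fin (2 * d)))) (𝓝 0) := by
  -- `π z` and its adjoint are isometries
  have hadj_apply : ∀ z (v : H), π z (adjoint (π z) v) = v := by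
    intro z v
    have := congrArg (fun T : H →L[ℂ] H => T v) (hunit z).1
    simpa using this
  have hadj_apply' : ∀ z (v : H), adjoint (π z) (π z v) = v := by
    intro z v
    have := congrArg (fun T : H →L[ℂ] H => T v) (hunit z).2
    simpa using this
  have hiso_adj : ∀ z (v : H), ‖adjoint (π z) v‖ = ‖v‖ := by
    intro z v
    have h : (inner ℂ (adjoint (π z) v) (adjoint (π z) v) : ℂ) = inner ℂ v v := by
      rw [ContinuousLinearMap.adjoint_inner_left, hadj_apply]
    rw [@inner_self_eq_norm_sq_to_K ℂ, @inner_self_eq_norm_sq_to_K ℂ] at h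
    have h2 : ‖adjoint (π z) v‖ ^ 2 = ‖v‖ ^ 2 := by exact_mod_cast h
    rw [← Real.sqrt_sq (norm_nonneg (adjoint (π z) v)), ← Real.sqrt_sq (norm_nonneg v), h2]
  have hiso : ∀ z (v : H), ‖π z v‖ = ‖v‖ := by
    intro z v
    have := hiso_adj z (π z v)
    rw [hadj_apply'] at this
    exact this.symm
  -- continuity
  have hcont_total : Continuous fun z => π z (S (adjoint (π z) ψ)) := by
    have hg : Continuous fun z => S (adjoint (π z) ψ) := S.continuous.comp (hcont' ψ)
    rw [continuous_iff_continuousAt]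
    intro z₀
    have h1 : Tendsto (fun z => π z (S (adjoint (π z) ψ) - S (adjoint (π z₀) ψ)))
        (𝓝 z₀) (𝓝 0) := by
      refine squeeze_zero_norm
        (a := fun z => ‖S (adjoint (π z) ψ) - S (adjoint (π z₀) ψ)‖) (fun z => ?_) ?_
      · rw [hiso]
      · have : Tendsto (fun z => S (adjoint (π z) ψ) - S (adjoint (π z₀) ψ)) (𝓝 z₀) (𝓝 0) := by
          have h4 := (hg.tendsto z₀).sub
            (tendsto_const_nhds (x := S (adjoint (π z₀) ψ)) (f := 𝓝 z₀))
          simpa using h4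
        simpa using this.norm
    have h2 : Tendsto (fun z => π z (S (adjoint (π z₀) ψ))) (𝓝 z₀)
        (𝓝 (π z₀ (S (adjoint (π z₀) ψ)))) := (hcont _).tendsto z₀
    have := h1.add h2
    simp only [zero_add] at this
    refine this.congr (fun z => ?_)
    rw [← map_add]
    congr 1
    abel
  have hc : Continuous (fun z => (inner ℂ φ (π z (S (adjoint (π z) ψ))) : ℂ)) :=
    Continuous.inner continuous_const hcont_total
  refine ⟨hc, ?_⟩
  -- rewrite the matrix coefficient
  have hrw : ∀ z, (inner ℂ φ (π z (S (adjoint (π z) ψ))) : ℂ)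
      = inner ℂ (adjoint (π z) φ) (S (adjoint (π z) ψ)) := by
    intro z
    rw [ContinuousLinearMap.adjoint_inner_left]
  -- a compact set containing all `S (adjoint (π z) ψ)`
  obtain ⟨K, hK, hKsub⟩ :=
    hS.image_closedBall_subset_compact (𝕜₁ := ℂ) (f := (S : H →ₗ[ℂ] H)) ‖ψ‖
  have hmem : ∀ z, S (adjoint (π z) ψ) ∈ K := by
    intro z
    apply hKsub
    exact ⟨adjoint (π z) ψ, by simp [Metric.mem_closedBall, hiso_adj], rfl⟩
  rw [Metric.tendsto_nhds]
  intro ε hε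
  set δ : ℝ := ε / (2 * (‖φ‖ + 1)) with hδdef
  have hφpos : (0:ℝ) < ‖φ‖ + 1 := by positivity
  have hδ : 0 < δ := by positivity
  obtain ⟨t, htfin, htsub⟩ := Metric.totallyBounded_iff.1 hK.totallyBounded δ hδ
  have hev : ∀ᶠ z in cocompact (EuclideanSpace ℝ (Fin (2 * d))),
      ∀ y ∈ t, ‖(inner ℂ φ (π z y) : ℂ)‖ < ε / 2 := by
    rw [eventually_all_finite htfin]
    intro y hy
    have h1 : Tendsto (fun z => (inner ℂ φ (π z y) : ℂ))
        (cocompact (EuclideanSpace ℝ (Fin (2 * d)))) (𝓝 0) := by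
      have h2 := (hC0 φ y).norm
      simp only [norm_zero] at h2
      apply tendsto_zero_iff_norm_tendsto_zero.2
      refine h2.congr (fun z => ?_)
      exact (norm_inner_symm _ _).symm
    have := h1.norm
    simp only [norm_zero] at this
    filter_upwards [this.eventually (eventually_lt_nhds (half_pos hε))] with z hz
    exact hz
  filter_upwards [hev] with z hz
  rw [dist_zero_right, hrw]
  obtain ⟨y, hy, hdy⟩ := by
    have := htsub (hmem z)
    simpa using this
  calc ‖(inner ℂ (adjoint (π z) φ) (S (adjoint (π z) ψ)) : ℂ)‖
      = ‖(inner ℂ (adjoint (π z) φ) (S (adjoint (π z) ψ) - y) : ℂ)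
        + (inner ℂ (adjoint (π z) φ) y : ℂ)‖ := by rw [← inner_add_right, sub_add_cancel]
    _ ≤ ‖(inner ℂ (adjoint (π z) φ) (S (adjoint (π z) ψ) - y) : ℂ)‖
        + ‖(inner ℂ (adjoint (π z) φ) y : ℂ)‖ := norm_add_le _ _
    _ ≤ ‖φ‖ * δ + ε / 2 := by
        apply add_le_add
        · calc ‖(inner ℂ (adjoint (π z) φ) (S (adjoint (π z) ψ) - y) : ℂ)‖
              ≤ ‖adjoint (π z) φ‖ * ‖S (adjoint (π z) ψ) - y‖ := norm_inner_le_norm _ _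
          _ ≤ ‖φ‖ * δ := by
              rw [hiso_adj]
              apply mul_le_mul_of_nonneg_left _ (norm_nonneg φ)
              have := Metric.mem_ball.1 hdy
              rw [dist_eq_norm] at this
              exact this.le
        · have h := hz y hy
          have : (inner ℂ (adjoint (π z) φ) y : ℂ) = inner ℂ φ (π z y) := by
            rw [ContinuousLinearMap.adjoint_inner_left]
          rw [this]
          exact h.le
    _ < ε := by
        have h1 : ‖φ‖ * δ < ε / 2 := by
          rw [hδdef]
          rw [← mul_div_assoc, div_lt_div_iff₀ (by positivity) two_pos]
          nlinarith [norm_nonneg φ]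
        linarith

end
end

section
/- Let S be a positive trace-class operator and Λ a lattice such that Σ_{λ∈Λ} Q_S(ψ)(λ) = ‖ψ‖² for all ψ ∈ L²(ℝᵈ), where Q_S(ψ)(λ) = ⟨Sπ(λ)*ψ, π(λ)*ψ⟩. Then for any trace-class operator T, Σ_{λ∈Λ} tr(T π(λ)Sπ(λ)*) = tr(T). -/
open ContinuousLinearMap

noncomputable section
set_option linter.unusedSectionVars false
set_option linter.unusedVariables false
set_option maxHeartbeats 1000000

variable {H : Type*} [NormedAddCommGroup H] [InnerProductSpace ℂ H] [CompleteSpace H]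

private lemma aux_real {S : H →L[ℂ] H} (hS : S.IsPositive) (u : H) :
    (inner ℂ u (S u) : ℂ) = ((inner ℂ u (S u) : ℂ).re : ℂ) := by
  have h := LinearMap.IsSymmetric.coe_reApplyInnerSelf_apply (T := S) hS.1 u
  have h2 : (inner ℂ u (S u) : ℂ) = inner ℂ (S u) u := (hS.1 u u).symm
  rw [h2, ← h]
  simp

private lemma aux_nonneg {S : H →L[ℂ] H} (hS : S.IsPositive) (u : H) :
    0 ≤ ((inner ℂ u (S u) : ℂ)).re := by
  have h2 : (inner ℂ u (S u) : ℂ) = inner ℂ (S u) u := (hS.1 u u).symm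
  rw [h2]
  exact hS.2 u

private lemma aux_cs {S : H →L[ℂ] H} (hS : S.IsPositive) (u v : H) :
    ‖(inner ℂ u (S v) : ℂ)‖ ≤ (((inner ℂ u (S u) : ℂ)).re + ((inner ℂ v (S v) : ℂ)).re) / 2 := by
  set s : ℂ := inner ℂ u (S v) with hs_def
  by_cases hs : s = 0
  · rw [hs, norm_zero]
    have := aux_nonneg hS u; have := aux_nonneg hS v; linarith
  · set a : ℝ := ((inner ℂ u (S u) : ℂ)).re with ha_def
    set bb : ℝ := ((inner ℂ v (S v) : ℂ)).re with hb_def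
    have hvu : (inner ℂ v (S u) : ℂ) = (starRingEnd ℂ) s := by
      rw [← inner_conj_symm v (S u)]
      congr 1
      exact hS.1 u v
    set w : H := (‖s‖ : ℂ) • u - (starRingEnd ℂ) s • v with hw_def
    have key : (inner ℂ w (S w) : ℂ) = ((‖s‖^2*a - 2*‖s‖^3 + ‖s‖^2*bb : ℝ) : ℂ) := by
      have hmc : s * (starRingEnd ℂ) s = ((‖s‖ : ℂ))^2 := RCLike.mul_conj s
      have hau : (inner ℂ u (S u) : ℂ) = (a : ℂ) := aux_real hS u
      have hbv : (inner ℂ v (S v) : ℂ) = (bb : ℂ) := aux_real hS v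
      simp only [hw_def, map_sub, map_smul, inner_sub_left, inner_sub_right,
        inner_smul_left, inner_smul_right, Complex.conj_ofReal, Complex.conj_conj,
        hvu, hau, hbv, ← hs_def]
      push_cast
      linear_combination ((bb : ℂ) - 2*(‖s‖ : ℂ)) * hmc
    have hpos : (0:ℝ) ≤ ‖s‖^2*a - 2*‖s‖^3 + ‖s‖^2*bb := by
      have h0 := aux_nonneg hS w
      rw [key] at h0
      rwa [Complex.ofReal_re] at h0
    have hn : 0 < ‖s‖ := norm_pos_iff.mpr hs
    nlinarith [mul_pos hn hn]

private lemma polar_form (T B : H →L[ℂ] H) (x y : H) :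
    (inner ℂ (B x) (T (B y)) : ℂ)
      = ((inner ℂ (B (x+y)) (T (B (x+y))) : ℂ) - (inner ℂ (B (x-y)) (T (B (x-y))) : ℂ)
        - Complex.I * (inner ℂ (B (x + Complex.I • y)) (T (B (x + Complex.I • y))) : ℂ)
        + Complex.I * (inner ℂ (B (x - Complex.I • y)) (T (B (x - Complex.I • y))) : ℂ)) / 4 := by
  simp only [map_add, map_sub, map_smul, inner_add_left, inner_add_right,
    inner_sub_left, inner_sub_right, inner_smul_left, inner_smul_right, Complex.conj_I,
    smul_eq_mul]
  linear_combination ((inner ℂ (B x) (T (B y)) : ℂ) - (inner ℂ (B y) (T (B x)) : ℂ)) / 2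
    * Complex.I_mul_I

private lemma frame_re {ι : Type*} {S : H →L[ℂ] H} (hS : S.IsPositive) (A : ι → H →L[ℂ] H)
    (hframe : ∀ ψ : H, ∑' i, (inner ℂ (A i ψ) (S (A i ψ)) : ℂ) = (‖ψ‖ ^ 2 : ℂ)) (ψ : H) :
    Summable (fun i => ((inner ℂ (A i ψ) (S (A i ψ)) : ℂ)).re) ∧
      ∑' i, ((inner ℂ (A i ψ) (S (A i ψ)) : ℂ)).re = ‖ψ‖ ^ 2 := by
  have hre : ∀ i, (inner ℂ (A i ψ) (S (A i ψ)) : ℂ)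
      = (((inner ℂ (A i ψ) (S (A i ψ)) : ℂ)).re : ℂ) := fun i => aux_real hS (A i ψ)
  have hsum : Summable (fun i => ((inner ℂ (A i ψ) (S (A i ψ)) : ℂ)).re) := by
    by_contra hcon
    have h1 : ¬ Summable (fun i => (inner ℂ (A i ψ) (S (A i ψ)) : ℂ)) := fun hsum =>
      hcon (Complex.summable_ofReal.mp (hsum.congr hre))
    have h2 := tsum_eq_zero_of_not_summable h1
    rw [hframe ψ] at h2
    have hn : ‖ψ‖ ^ 2 = (0:ℝ) := by exact_mod_cast h2
    have hψ : ψ = 0 := norm_eq_zero.mp (by nlinarith [norm_nonneg ψ])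
    apply hcon
    apply summable_zero.congr
    intro i
    simp [hψ]
  refine ⟨hsum, ?_⟩
  have h3 : ((∑' i, ((inner ℂ (A i ψ) (S (A i ψ)) : ℂ)).re : ℝ) : ℂ) = ((‖ψ‖ ^ 2 : ℝ) : ℂ) := by
    rw [Complex.ofReal_tsum]
    push_cast
    rw [← tsum_congr hre, hframe ψ]
  exact_mod_cast h3

private lemma frame_polar {ι : Type*} {S : H →L[ℂ] H} (hS : S.IsPositive) (A : ι → H →L[ℂ] H)
    (hSc : ∀ χ : H, Summable (fun i => (inner ℂ (A i χ) (S (A i χ)) : ℂ)))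
    (hframe : ∀ ψ : H, ∑' i, (inner ℂ (A i ψ) (S (A i ψ)) : ℂ) = (‖ψ‖ ^ 2 : ℂ)) (x y : H) :
    Summable (fun i => (inner ℂ (A i x) (S (A i y)) : ℂ)) ∧
      ∑' i, (inner ℂ (A i x) (S (A i y)) : ℂ) = inner ℂ x y := by
  have hfun : (fun i => (inner ℂ (A i x) (S (A i y)) : ℂ)) = fun i =>
      ((inner ℂ (A i (x+y)) (S (A i (x+y))) : ℂ) - (inner ℂ (A i (x-y)) (S (A i (x-y))) : ℂ)
        - Complex.I * (inner ℂ (A i (x + Complex.I • y)) (S (A i (x + Complex.I • y))) : ℂ)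
        + Complex.I * (inner ℂ (A i (x - Complex.I • y)) (S (A i (x - Complex.I • y))) : ℂ)) / 4 :=
    funext fun i => polar_form S (A i) x y
  have s1 := hSc (x + y)
  have s2 := hSc (x - y)
  have s3 := (hSc (x + Complex.I • y)).mul_left Complex.I
  have s4 := (hSc (x - Complex.I • y)).mul_left Complex.I
  constructor
  · rw [hfun]
    exact (((s1.sub s2).sub s3).add s4).div_const 4
  · rw [hfun, tsum_div_const, Summable.tsum_add ((s1.sub s2).sub s3) s4, Summable.tsum_sub (s1.sub s2) s3,
      Summable.tsum_sub s1 s2, tsum_mul_left, tsum_mul_left, hframe, hframe, hframe, hframe]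
    have h := polar_form (1 : H →L[ℂ] H) 1 x y
    simp only [ContinuousLinearMap.one_apply] at h
    rw [h]
    simp [inner_self_eq_norm_sq_to_K]

/-- If `S` is a positive trace-class operator with `Σ_{λ∈Λ} Q_S(ψ)(λ) = ‖ψ‖²` for all `ψ`
(`Q_S(ψ)(λ) = ⟨Sπ(λ)*ψ, π(λ)*ψ⟩`), then for any trace-class `T`, expanded in its singular
value decomposition `T = Σₙ tₙ(ξₙ⊗ηₙ)`, one has `Σ_{λ∈Λ} tr(T π(λ)Sπ(λ)*) = tr(T)`,
where `tr(T π(λ)Sπ(λ)*) = Σₙ tₙ ⟨π(λ)Sπ(λ)*ξₙ, ηₙ⟩`. -/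
theorem sum_op_conv_eq_trace {d : ℕ}
    (Λ : Submodule ℤ (EuclideanSpace ℝ (Fin (2 * d))))
    [DiscreteTopology Λ] [IsZLattice ℝ Λ]
    (π : EuclideanSpace ℝ (Fin (2 * d)) → H →L[ℂ] H)
    (hunit : ∀ z, π z ∘L adjoint (π z) = 1 ∧ adjoint (π z) ∘L π z = 1)
    (hmul : ∀ z w, ∃ c : ℂ, ‖c‖ = 1 ∧ π z ∘L π w = c • π (z + w))
    (S : H →L[ℂ] H) (hSpos : S.IsPositive)
    (b : HilbertBasis ℕ ℂ H) (hStc : Summable fun i => ((inner ℂ (b i) (S (b i)) : ℂ)).re)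
    (hframe : ∀ ψ : H,
      ∑' lam : Λ, (inner ℂ (adjoint (π (lam : EuclideanSpace ℝ (Fin (2 * d)))) ψ)
          (S (adjoint (π (lam : EuclideanSpace ℝ (Fin (2 * d)))) ψ)) : ℂ)
        = (‖ψ‖ ^ 2 : ℂ))
    (t : ℕ → ℝ) (ht0 : ∀ n, 0 ≤ t n) (ht : Summable t)
    (ξ η : ℕ → H) (hξ : Orthonormal ℂ ξ) (hη : Orthonormal ℂ η) :
    ∑' lam : Λ, ∑' n, (t n : ℂ) *
        (inner ℂ (η n) (π (lam : EuclideanSpace ℝ (Fin (2 * d)))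
          (S (adjoint (π (lam : EuclideanSpace ℝ (Fin (2 * d)))) (ξ n)))) : ℂ)
      = ∑' n, (t n : ℂ) * (inner ℂ (η n) (ξ n) : ℂ) := by
  classical
  -- abbreviation
  let A : Λ → H →L[ℂ] H := fun lam => adjoint (π (lam : EuclideanSpace ℝ (Fin (2 * d))))
  have hfr : ∀ ψ : H, ∑' i : Λ, (inner ℂ (A i ψ) (S (A i ψ)) : ℂ) = (‖ψ‖ ^ 2 : ℂ) := hframe
  have hre := frame_re hSpos A hfr
  have hSc : ∀ χ : H, Summable (fun i : Λ => (inner ℂ (A i χ) (S (A i χ)) : ℂ)) := fun χ =>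
    (Complex.summable_ofReal.mpr (hre χ).1).congr fun i => (aux_real hSpos (A i χ)).symm
  have hpolar := frame_polar hSpos A hSc hfr
  -- rewrite the inner ℂ products in the goal
  have hg : ∀ (lam : Λ) (n : ℕ),
      (inner ℂ (η n) (π (lam : EuclideanSpace ℝ (Fin (2 * d)))
        (S (adjoint (π (lam : EuclideanSpace ℝ (Fin (2 * d)))) (ξ n)))) : ℂ)
      = inner ℂ (A lam (η n)) (S (A lam (ξ n))) := fun lam n =>
    (adjoint_inner_left (π (lam : EuclideanSpace ℝ (Fin (2 * d)))) _ (η n)).symm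
  simp only [hg]
  -- the real dominating function
  have hP : Summable (fun p : ℕ × Λ => t p.1 *
      ((((inner ℂ (A p.2 (η p.1)) (S (A p.2 (η p.1))) : ℂ)).re
        + ((inner ℂ (A p.2 (ξ p.1)) (S (A p.2 (ξ p.1))) : ℂ)).re) / 2)) := by
    rw [summable_prod_of_nonneg]
    · constructor
      · intro n
        exact ((((hre (η n)).1.add (hre (ξ n)).1)).div_const 2).mul_left (t n)
      · have hval : ∀ n : ℕ, (∑' lam : Λ, t n *
            ((((inner ℂ (A lam (η n)) (S (A lam (η n))) : ℂ)).re
              + ((inner ℂ (A lam (ξ n)) (S (A lam (ξ n))) : ℂ)).re) / 2)) = t n := by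
          intro n
          rw [tsum_mul_left, tsum_div_const, Summable.tsum_add (hre (η n)).1 (hre (ξ n)).1,
            (hre (η n)).2, (hre (ξ n)).2, hη.1 n, hξ.1 n]
          norm_num
        exact ht.congr fun n => (hval n).symm
    · intro p
      have := aux_nonneg hSpos (A p.2 (η p.1))
      have := aux_nonneg hSpos (A p.2 (ξ p.1))
      have := ht0 p.1
      positivity
  -- summability of the full double family
  have hFsum : Summable (fun p : Λ × ℕ =>
      (t p.2 : ℂ) * (inner ℂ (A p.1 (η p.2)) (S (A p.1 (ξ p.2))) : ℂ)) := by
    apply Summable.of_norm_bounded (g := fun p : Λ × ℕ => t p.2 *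
      ((((inner ℂ (A p.1 (η p.2)) (S (A p.1 (η p.2))) : ℂ)).re
        + ((inner ℂ (A p.1 (ξ p.2)) (S (A p.1 (ξ p.2))) : ℂ)).re) / 2))
    · exact ((Equiv.prodComm Λ ℕ).summable_iff.mpr hP)
    · intro p
      rw [norm_mul, Complex.norm_real, Real.norm_eq_abs, abs_of_nonneg (ht0 p.2)]
      exact mul_le_mul_of_nonneg_left (aux_cs hSpos _ _) (ht0 p.2)
  -- Fubini
  have hFsum' : Summable (Function.uncurry fun (lam : Λ) (n : ℕ) =>
      (t n : ℂ) * (inner ℂ (A lam (η n)) (S (A lam (ξ n))) : ℂ)) := hFsum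
  rw [← Summable.tsum_comm hFsum']
  refine tsum_congr fun n => ?_
  rw [tsum_mul_left, (hpolar (η n) (ξ n)).2]

end
end

section
/- Let G be a positive trace-class operator on a Hilbert space whose eigenvalues λₖ (with multiplicity) all satisfy 0 ≤ λₖ ≤ 1, and fix δ ∈ (0,1). Then |#{k : λₖ > 1−δ} − tr(G)| ≤ max{1/δ, 1/(1−δ)} · tr(G − G²). -/
noncomputable section

variable {H : Type*} [NormedAddCommGroup H] [InnerProductSpace ℂ H] [CompleteSpace H]

/-- Let `G` be a positive trace-class operator, with eigendecomposition
`G = Σₖ λₖ (hₖ ⊗ hₖ)` for an orthonormal family `(hₖ)` and summable eigenvalues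
`0 ≤ λₖ ≤ 1`, and fix `δ ∈ (0,1)`. Then
`|#{k : λₖ > 1−δ} − tr(G)| ≤ max{1/δ, 1/(1−δ)} · tr(G − G²)`, where `tr G = Σₖ λₖ` and
`tr(G − G²) = Σₖ (λₖ − λₖ²)`. -/
theorem eigenvalue_counting_estimate
    (G : H →L[ℂ] H) (h : ℕ → H) (hh : Orthonormal ℂ h)
    (lam : ℕ → ℝ) (hlam : ∀ k, 0 ≤ lam k ∧ lam k ≤ 1) (hsum : Summable lam)
    (hG : HasSum (fun k => lam k • ((innerSL ℂ (h k)).smulRight (h k))) G)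
    (δ : ℝ) (hδ : δ ∈ Set.Ioo (0 : ℝ) 1) :
    |(({k | 1 - δ < lam k}.ncard : ℝ)) - ∑' k, lam k|
      ≤ max (1 / δ) (1 / (1 - δ)) * ∑' k, (lam k - lam k ^ 2) := by
  obtain ⟨hδ0, hδ1⟩ := hδ
  have hδ1' : (0:ℝ) < 1 - δ := by linarith
  set S := {k | 1 - δ < lam k} with hS
  set C := max (1 / δ) (1 / (1 - δ)) with hC
  have hfin : S.Finite := by
    have h1 : ∀ᶠ k in Filter.cofinite, lam k < 1 - δ :=
      hsum.tendsto_cofinite_zero.eventually_lt_const hδ1'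
    exact (Filter.eventually_cofinite.mp h1).subset fun k hk => not_lt.mpr hk.le
  have hind : HasSum (S.indicator fun _ => (1:ℝ)) (S.ncard : ℝ) := by
    have h0 : ∀ k ∉ hfin.toFinset, S.indicator (fun _ => (1:ℝ)) k = 0 := by
      intro k hk
      simp only [Set.Finite.mem_toFinset] at hk
      simp [Set.indicator_of_notMem hk]
    have := hasSum_sum_of_ne_finset_zero (L := SummationFilter.unconditional ℕ) h0
    have hcard : ∑ k ∈ hfin.toFinset, S.indicator (fun _ => (1:ℝ)) k = (S.ncard : ℝ) := by
      rw [Finset.sum_congr rfl (fun k hk => Set.indicator_of_mem (hfin.mem_toFinset.mp hk) _)]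
      simp [Set.ncard_eq_toFinset_card' ]
      rw [Set.ncard_eq_toFinset_card S hfin]
    rwa [hcard] at this
  have hsum2 : Summable (fun k => lam k - lam k ^ 2) := by
    apply hsum.of_nonneg_of_le
    · intro k
      have := (hlam k).1; have := (hlam k).2; nlinarith
    · intro k
      have := (hlam k).1; nlinarith [sq_nonneg (lam k)]
  have hbound : ∀ k, ‖S.indicator (fun _ => (1:ℝ)) k - lam k‖ ≤ C * (lam k - lam k ^ 2) := by
    intro k
    have h0 := (hlam k).1
    have h1 := (hlam k).2
    rw [Real.norm_eq_abs]
    by_cases hk : k ∈ S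
    · rw [Set.indicator_of_mem hk]
      have hk' : 1 - δ < lam k := hk
      have hCge : 1 / (1 - δ) ≤ C := le_max_right _ _
      have hC1 : 1 ≤ C * lam k := by
        have : 1 / (1 - δ) * lam k ≥ 1 := by
          rw [ge_iff_le, div_mul_eq_mul_div, le_div_iff₀ hδ1']
          linarith
        nlinarith [mul_le_mul_of_nonneg_right hCge h0]
      rw [abs_of_nonneg (by linarith)]
      nlinarith
    · rw [Set.indicator_of_notMem hk]
      have hk' : lam k ≤ 1 - δ := not_lt.mp hk
      have hCge : 1 / δ ≤ C := le_max_left _ _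
      have hC1 : 1 ≤ C * (1 - lam k) := by
        have : 1 ≤ 1 / δ * (1 - lam k) := by
          rw [div_mul_eq_mul_div, le_div_iff₀ hδ0]
          linarith
        nlinarith [mul_le_mul_of_nonneg_right hCge (by linarith : (0:ℝ) ≤ 1 - lam k)]
      rw [abs_of_nonpos (by linarith), neg_sub]
      nlinarith
  have hdiff : HasSum (fun k => S.indicator (fun _ => (1:ℝ)) k - lam k)
      ((S.ncard : ℝ) - ∑' k, lam k) := hind.sub hsum.hasSum
  have key := tsum_of_norm_bounded (hsum2.hasSum.mul_left C) hbound
  rw [hdiff.tsum_eq, Real.norm_eq_abs] at key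
  calc |(S.ncard : ℝ) - ∑' k, lam k| ≤ C * ∑' k, (lam k - lam k ^ 2) := key
    _ = _ := by rw [hC]

end
end

section
/- Let S be a positive trace-class operator and Λ a lattice such that A‖ψ‖² ≤ Σ_{λ∈Λ} Q_S(ψ)(λ) ≤ B‖ψ‖² for all ψ ∈ L²(ℝᵈ). Let c ∈ ℓ¹(Λ) be non-negative and μ_c = Σ_{λ∈Λ} c(λ)δ_λ. Then the operator μ̌_c ⋆ S satisfies (A Σ_λ c(λ))‖ψ‖² ≤ Σ_{λ∈Λ} Q_{μ̌_c⋆S}(ψ)(λ) ≤ (B Σ_λ c(λ))‖ψ‖², i.e., (μ̌_c⋆S, Λ) is a mixed-state Gabor frame with frame bounds A Σc, B Σc. -/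
open ContinuousLinearMap

noncomputable section

variable {H : Type*} [NormedAddCommGroup H] [InnerProductSpace ℂ H] [CompleteSpace H]

/-- The Cohen class distribution `Q_S(ψ)(z) = ⟨Sπ(z)*ψ, π(z)*ψ⟩`. -/
def Qs {d : ℕ} (π : EuclideanSpace ℝ (Fin (2 * d)) → H →L[ℂ] H) (S : H →L[ℂ] H)
    (ψ : H) (z : EuclideanSpace ℝ (Fin (2 * d))) : ℝ :=
  ((inner ℂ (adjoint (π z) ψ) (S (adjoint (π z) ψ)) : ℂ)).re

private lemma adjoint_smul' (u : ℂ) (T : H →L[ℂ] H) :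
    adjoint (u • T) = (starRingEnd ℂ u) • adjoint T := by
  ext x
  refine ext_inner_left ℂ fun y => ?_
  rw [adjoint_inner_right]
  simp [adjoint_inner_right, inner_smul_left, inner_smul_right]

set_option maxHeartbeats 1000000 in
/-- If `(S, Λ)` is a mixed-state Gabor frame with frame bounds `A, B`, `c ∈ ℓ¹(Λ)` is
non-negative, and `μ̌_c ⋆ S = Σ_{λ'∈Λ} c(λ') π(−λ')Sπ(−λ')*`, then `(μ̌_c ⋆ S, Λ)` is a
mixed-state Gabor frame with frame bounds `A Σc` and `B Σc`. -/
theorem frame_bounds_of_measure_conv {d : ℕ}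
    (Λ : Submodule ℤ (EuclideanSpace ℝ (Fin (2 * d))))
    [DiscreteTopology Λ] [IsZLattice ℝ Λ]
    (π : EuclideanSpace ℝ (Fin (2 * d)) → H →L[ℂ] H)
    (hunit : ∀ z, π z ∘L adjoint (π z) = 1 ∧ adjoint (π z) ∘L π z = 1)
    (hmul : ∀ z w, ∃ c : ℂ, ‖c‖ = 1 ∧ π z ∘L π w = c • π (z + w))
    (S : H →L[ℂ] H) (hSpos : S.IsPositive)
    (b : HilbertBasis ℕ ℂ H)
    (hStc : Summable fun i => ((inner ℂ (b i) (S (b i)) : ℂ)).re)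
    (A B : ℝ) (hA : 0 < A) (hB : 0 < B)
    (hsummable : ∀ ψ : H,
      Summable fun lam : Λ => Qs π S ψ (lam : EuclideanSpace ℝ (Fin (2 * d))))
    (hframe : ∀ ψ : H,
      A * ‖ψ‖ ^ 2 ≤ ∑' lam : Λ, Qs π S ψ (lam : EuclideanSpace ℝ (Fin (2 * d))) ∧
      ∑' lam : Λ, Qs π S ψ (lam : EuclideanSpace ℝ (Fin (2 * d))) ≤ B * ‖ψ‖ ^ 2)
    (c : Λ → ℝ) (hc0 : ∀ lam, 0 ≤ c lam) (hc : Summable c)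
    (Sc : H →L[ℂ] H)
    (hSc : ∀ ψ φ : H, (inner ℂ φ (Sc ψ) : ℂ) =
      ∑' lam' : Λ, (c lam' : ℂ) *
        (inner ℂ φ (π (-(lam' : EuclideanSpace ℝ (Fin (2 * d))))
          (S (adjoint (π (-(lam' : EuclideanSpace ℝ (Fin (2 * d))))) ψ))) : ℂ)) :
    ∀ ψ : H,
      (A * ∑' lam, c lam) * ‖ψ‖ ^ 2
          ≤ ∑' lam : Λ, Qs π Sc ψ (lam : EuclideanSpace ℝ (Fin (2 * d))) ∧
      ∑' lam : Λ, Qs π Sc ψ (lam : EuclideanSpace ℝ (Fin (2 * d)))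
          ≤ (B * ∑' lam, c lam) * ‖ψ‖ ^ 2 := by
  intro ψ
  have hQnn : ∀ (φ : H) (z : EuclideanSpace ℝ (Fin (2 * d))), 0 ≤ Qs π S φ z := by
    intro φ z
    simpa [Qs] using (Complex.nonneg_iff.mp (hSpos.inner_nonneg_right (adjoint (π z) φ))).1
  have hselfadj : ContinuousLinearMap.adjoint S = S := hSpos.isSelfAdjoint.adjoint_eq
  have hreal : ∀ v : H, (inner ℂ v (S v) : ℂ) = (((inner ℂ v (S v) : ℂ)).re : ℂ) := by
    intro v
    have hconj : (starRingEnd ℂ) (inner ℂ v (S v) : ℂ) = (inner ℂ v (S v) : ℂ) := by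
      rw [inner_conj_symm, ← adjoint_inner_right, hselfadj]
    exact (Complex.conj_eq_iff_re.mp hconj).symm
  -- the key pointwise identity
  have key : ∀ lam lam' : Λ,
      (inner ℂ (adjoint (π lam) ψ)
        (π (-(lam' : EuclideanSpace ℝ (Fin (2 * d))))
          (S (adjoint (π (-(lam' : EuclideanSpace ℝ (Fin (2 * d))))) (adjoint (π lam) ψ)))) : ℂ)
      = ((Qs π S ψ ((lam - lam' : Λ) : EuclideanSpace ℝ (Fin (2 * d))) : ℝ) : ℂ) := by
    intro lam lam'
    obtain ⟨u, hu, hmuleq⟩ :=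
      hmul (lam : EuclideanSpace ℝ (Fin (2 * d))) (-(lam' : EuclideanSpace ℝ (Fin (2 * d))))
    have hcoe : (lam : EuclideanSpace ℝ (Fin (2 * d))) +
        -(lam' : EuclideanSpace ℝ (Fin (2 * d)))
        = ((lam - lam' : Λ) : EuclideanSpace ℝ (Fin (2 * d))) := by
      push_cast
      abel
    rw [← adjoint_inner_left]
    have hv : adjoint (π (-(lam' : EuclideanSpace ℝ (Fin (2 * d))))) (adjoint (π lam) ψ)
        = (starRingEnd ℂ u) •
          adjoint (π ((lam - lam' : Λ) : EuclideanSpace ℝ (Fin (2 * d)))) ψ := by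
      have hcomp : adjoint (π (-(lam' : EuclideanSpace ℝ (Fin (2 * d))))) ∘L adjoint (π lam)
          = adjoint (π (lam : EuclideanSpace ℝ (Fin (2 * d)))
              ∘L π (-(lam' : EuclideanSpace ℝ (Fin (2 * d))))) := (adjoint_comp _ _).symm
      have : adjoint (π (-(lam' : EuclideanSpace ℝ (Fin (2 * d))))) (adjoint (π lam) ψ)
          = (adjoint (π (lam : EuclideanSpace ℝ (Fin (2 * d)))
              ∘L π (-(lam' : EuclideanSpace ℝ (Fin (2 * d)))))) ψ := by
        rw [← hcomp]; rfl
      rw [this, hmuleq, hcoe, adjoint_smul']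
      rfl
    rw [hv, inner_smul_left, map_smul, inner_smul_right]
    have hu1 : u * (starRingEnd ℂ) u = 1 := by
      rw [Complex.mul_conj, Complex.normSq_eq_norm_sq, hu]
      norm_num
    rw [Complex.conj_conj, ← mul_assoc, hu1, one_mul]
    rw [hreal]
    rfl
  -- bounds and summability for the double sum
  have hsum1 : ∀ lam' : Λ,
      Summable (fun lam : Λ => Qs π S ψ (((lam - lam' : Λ) : EuclideanSpace ℝ (Fin (2 * d))))) :=
    fun lam' => ((Equiv.subRight lam').summable_iff).2 (hsummable ψ)
  have htsum1 : ∀ lam' : Λ,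
      ∑' lam : Λ, Qs π S ψ (((lam - lam' : Λ) : EuclideanSpace ℝ (Fin (2 * d))))
        = ∑' lam : Λ, Qs π S ψ (lam : EuclideanSpace ℝ (Fin (2 * d))) :=
    fun lam' => (Equiv.subRight lam').tsum_eq
      (fun lam : Λ => Qs π S ψ (lam : EuclideanSpace ℝ (Fin (2 * d))))
  have hgnn : ∀ p : Λ × Λ,
      0 ≤ c p.1 * Qs π S ψ ((p.2 - p.1 : Λ) : EuclideanSpace ℝ (Fin (2 * d))) :=
    fun p => mul_nonneg (hc0 _) (hQnn ψ _)
  have hg : Summable (fun p : Λ × Λ =>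
      c p.1 * Qs π S ψ ((p.2 - p.1 : Λ) : EuclideanSpace ℝ (Fin (2 * d)))) := by
    have hiff := summable_prod_of_nonneg
      (f := fun p : Λ × Λ =>
        c p.1 * Qs π S ψ ((p.2 - p.1 : Λ) : EuclideanSpace ℝ (Fin (2 * d)))) hgnn
    refine hiff.2 ⟨fun lam' => (hsum1 lam').mul_left (c lam'), ?_⟩
    have heq : (fun lam' : Λ => ∑' lam : Λ,
        c lam' * Qs π S ψ ((lam - lam' : Λ) : EuclideanSpace ℝ (Fin (2 * d))))
        = fun lam' : Λ => c lam' *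
            ∑' lam : Λ, Qs π S ψ (lam : EuclideanSpace ℝ (Fin (2 * d))) := by
      funext lam'
      rw [tsum_mul_left, htsum1]
    rw [heq]
    exact hc.mul_right _
  -- pointwise identity for the convolved operator
  have hpt : ∀ lam : Λ, Qs π Sc ψ (lam : EuclideanSpace ℝ (Fin (2 * d)))
      = ∑' lam' : Λ, c lam' *
          Qs π S ψ ((lam - lam' : Λ) : EuclideanSpace ℝ (Fin (2 * d))) := by
    intro lam
    have h1 : (inner ℂ (adjoint (π lam) ψ) (Sc (adjoint (π lam) ψ)) : ℂ)
        = ((∑' lam' : Λ, c lam' *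
            Qs π S ψ ((lam - lam' : Λ) : EuclideanSpace ℝ (Fin (2 * d))) : ℝ) : ℂ) := by
      rw [hSc, Complex.ofReal_tsum]
      congr 1
      funext lam'
      rw [key lam lam', Complex.ofReal_mul]
    have h2 : Qs π Sc ψ (lam : EuclideanSpace ℝ (Fin (2 * d)))
        = ((inner ℂ (adjoint (π lam) ψ) (Sc (adjoint (π lam) ψ)) : ℂ)).re := rfl
    rw [h2, h1, Complex.ofReal_re]
  -- total sum identity
  have htotal : ∑' lam : Λ, Qs π Sc ψ (lam : EuclideanSpace ℝ (Fin (2 * d)))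
      = (∑' lam', c lam') *
          ∑' lam : Λ, Qs π S ψ (lam : EuclideanSpace ℝ (Fin (2 * d))) := by
    calc ∑' lam : Λ, Qs π Sc ψ (lam : EuclideanSpace ℝ (Fin (2 * d)))
        = ∑' (lam : Λ) (lam' : Λ), c lam' *
            Qs π S ψ ((lam - lam' : Λ) : EuclideanSpace ℝ (Fin (2 * d))) := by
          exact tsum_congr hpt
      _ = ∑' (lam' : Λ) (lam : Λ), c lam' *
            Qs π S ψ ((lam - lam' : Λ) : EuclideanSpace ℝ (Fin (2 * d))) := Summable.tsum_comm hg
      _ = ∑' lam' : Λ, c lam' *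
            ∑' lam : Λ, Qs π S ψ (lam : EuclideanSpace ℝ (Fin (2 * d))) := by
          refine tsum_congr fun lam' => ?_
          rw [tsum_mul_left, htsum1]
      _ = _ := tsum_mul_right
  have hT := hframe ψ
  have hcnn : 0 ≤ ∑' lam, c lam := tsum_nonneg hc0
  constructor
  · calc (A * ∑' lam, c lam) * ‖ψ‖ ^ 2
        = (∑' lam, c lam) * (A * ‖ψ‖ ^ 2) := by ring
      _ ≤ (∑' lam, c lam) *
            ∑' lam : Λ, Qs π S ψ (lam : EuclideanSpace ℝ (Fin (2 * d))) :=
          mul_le_mul_of_nonneg_left hT.1 hcnn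
      _ = _ := htotal.symm
  · calc ∑' lam : Λ, Qs π Sc ψ (lam : EuclideanSpace ℝ (Fin (2 * d)))
        = (∑' lam, c lam) *
            ∑' lam : Λ, Qs π S ψ (lam : EuclideanSpace ℝ (Fin (2 * d))) := htotal
      _ ≤ (∑' lam, c lam) * (B * ‖ψ‖ ^ 2) := mul_le_mul_of_nonneg_left hT.2 hcnn
      _ = (B * ∑' lam, c lam) * ‖ψ‖ ^ 2 := by ring

end
end
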